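/- Let g(z) = exp(exp(1/z)) for z > 0 and fix ε > 0. Then the function z ↦ g(z − ε)/g(z) is strictly decreasing on (ε, ∞), and for every z with ε < z < ε − 1/log ε (with 0 < ε < 1 so that −1/log ε > 0), one has g'(z−ε)/g'(z) > g(z−ε)/g(z) ≥ g(−1/log ε)/g(ε − 1/log ε). -/

import Mathlib

open Real

lemma g_hasDeriv (w : ℝ) (hw : w ≠ 0) :
    HasDerivAt (fun w : ℝ => Real.exp (Real.exp (1 / w)))
      (Real.exp (Real.exp (1 / w)) * (Real.exp (1 / w) * (-1 / w ^ 2))) w := by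
  have h1 : HasDerivAt (fun w : ℝ => 1 / w) (-1 / w ^ 2) w := by
    rw [show (fun w : ℝ => 1 / w) = fun w => w⁻¹ from funext fun _ => one_div _]
    exact (hasDerivAt_id' w).inv hw
  exact (h1.exp).exp

lemma shift_hasDeriv (ε z : ℝ) (hz : z - ε ≠ 0) :
    HasDerivAt (fun z : ℝ => Real.exp (1 / (z - ε)))
      (Real.exp (1 / (z - ε)) * (-1 / (z - ε) ^ 2)) z := by
  have h1 : HasDerivAt (fun z : ℝ => 1 / (z - ε)) (-1 / (z - ε) ^ 2) z := by
    rw [show (fun z : ℝ => 1 / (z - ε)) = fun z => (z - ε)⁻¹ from funext fun _ => one_div _]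
    exact ((hasDerivAt_id' z).sub_const ε).inv hz
  exact h1.exp

theorem stmt12 (ε : ℝ) (hε : 0 < ε) (hε1 : ε < 1) :
    StrictAntiOn
      (fun z : ℝ => Real.exp (Real.exp (1 / (z - ε))) / Real.exp (Real.exp (1 / z)))
      (Set.Ioi ε) ∧
    ∀ z : ℝ, ε < z → z < ε - 1 / Real.log ε →
      (deriv (fun w : ℝ => Real.exp (Real.exp (1 / w))) (z - ε)) /
          (deriv (fun w : ℝ => Real.exp (Real.exp (1 / w))) z) >
        Real.exp (Real.exp (1 / (z - ε))) / Real.exp (Real.exp (1 / z)) ∧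
      Real.exp (Real.exp (1 / (z - ε))) / Real.exp (Real.exp (1 / z)) ≥
        Real.exp (Real.exp (1 / (-1 / Real.log ε))) /
          Real.exp (Real.exp (1 / (ε - 1 / Real.log ε))) := by
  have hlog : Real.log ε < 0 := Real.log_neg hε hε1
  have hinv : 1 / Real.log ε < 0 := one_div_neg.mpr hlog
  -- f rewritten as exp of difference
  have hfeq : (fun z : ℝ => Real.exp (Real.exp (1 / (z - ε))) / Real.exp (Real.exp (1 / z)))
      = fun z : ℝ => Real.exp (Real.exp (1 / (z - ε)) - Real.exp (1 / z)) := by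
    funext z; rw [Real.exp_sub]
  -- derivative of f at points z > ε
  have hderiv : ∀ z : ℝ, ε < z →
      HasDerivAt (fun z : ℝ => Real.exp (Real.exp (1 / (z - ε)) - Real.exp (1 / z)))
        (Real.exp (Real.exp (1 / (z - ε)) - Real.exp (1 / z)) *
          (Real.exp (1 / (z - ε)) * (-1 / (z - ε) ^ 2) - Real.exp (1 / z) * (-1 / z ^ 2))) z := by
    intro z hz
    have hz0 : z ≠ 0 := (lt_trans hε hz).ne'
    have hzε : z - ε ≠ 0 := by intro h; nlinarith
    have h1 := shift_hasDeriv ε z hzε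
    have h2 : HasDerivAt (fun z : ℝ => Real.exp (1 / z)) (Real.exp (1 / z) * (-1 / z ^ 2)) z := by
      have : HasDerivAt (fun z : ℝ => 1 / z) (-1 / z ^ 2) z := by
        rw [show (fun z : ℝ => 1 / z) = fun z => z⁻¹ from funext fun _ => one_div _]
        exact (hasDerivAt_id' z).inv hz0
      exact this.exp
    exact (h1.sub h2).exp
  -- key positivity fact: for z > ε,  exp(1/z)/z^2 < exp(1/(z-ε))/(z-ε)^2
  have hkey : ∀ z : ℝ, ε < z →
      Real.exp (1 / z) / z ^ 2 < Real.exp (1 / (z - ε)) / (z - ε) ^ 2 := by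
    intro z hz
    have hz0 : 0 < z := lt_trans hε hz
    have hd : 0 < z - ε := by linarith
    have hlt : (1 : ℝ) / z < 1 / (z - ε) := by
      apply one_div_lt_one_div_of_lt hd; linarith
    have he : Real.exp (1 / z) < Real.exp (1 / (z - ε)) := Real.exp_lt_exp.mpr hlt
    have hsq : (z - ε) ^ 2 < z ^ 2 := by nlinarith
    rw [div_lt_div_iff₀ (by positivity) (by positivity)]
    nlinarith [Real.exp_pos (1 / z), Real.exp_pos (1 / (z - ε)), sq_nonneg (z - ε)]
  have hanti : StrictAntiOn
      (fun z : ℝ => Real.exp (Real.exp (1 / (z - ε))) / Real.exp (Real.exp (1 / z)))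
      (Set.Ioi ε) := by
    rw [hfeq]
    apply strictAntiOn_of_deriv_neg (convex_Ioi ε)
    · intro z hz
      exact ((hderiv z hz).continuousAt).continuousWithinAt
    · intro z hz
      rw [interior_Ioi] at hz
      rw [(hderiv z hz).deriv]
      have h := hkey z hz
      have hE := Real.exp_pos (Real.exp (1 / (z - ε)) - Real.exp (1 / z))
      have : Real.exp (1 / (z - ε)) * (-1 / (z - ε) ^ 2) - Real.exp (1 / z) * (-1 / z ^ 2) < 0 := by
        have h1 : Real.exp (1 / (z - ε)) * (-1 / (z - ε) ^ 2) = -(Real.exp (1 / (z - ε)) / (z - ε) ^ 2) := by ring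
        have h2 : Real.exp (1 / z) * (-1 / z ^ 2) = -(Real.exp (1 / z) / z ^ 2) := by ring
        rw [h1, h2]; linarith
      exact mul_neg_of_pos_of_neg hE this
  refine ⟨hanti, fun z hz hz' => ?_⟩
  have hz0 : 0 < z := lt_trans hε hz
  have hd : 0 < z - ε := by linarith
  constructor
  · -- derivative ratio
    rw [(g_hasDeriv (z - ε) (ne_of_gt hd)).deriv, (g_hasDeriv z (ne_of_gt hz0)).deriv]
    set A := Real.exp (Real.exp (1 / (z - ε))) with hA
    set B := Real.exp (Real.exp (1 / z)) with hB
    set a := Real.exp (1 / (z - ε)) / (z - ε) ^ 2 with ha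
    set b := Real.exp (1 / z) / z ^ 2 with hb
    have hab : b < a := hkey z hz
    have hApos : 0 < A := Real.exp_pos _
    have hBpos : 0 < B := Real.exp_pos _
    have hapos : 0 < a := by rw [ha]; positivity
    have hbpos : 0 < b := by rw [hb]; positivity
    have e1 : A * (Real.exp (1 / (z - ε)) * (-1 / (z - ε) ^ 2)) = -(A * a) := by
      rw [ha]; ring
    have e2 : B * (Real.exp (1 / z) * (-1 / z ^ 2)) = -(B * b) := by
      rw [hb]; ring
    rw [e1, e2, neg_div_neg_eq]
    rw [gt_iff_lt, div_lt_div_iff₀ hBpos (by positivity)]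
    nlinarith [mul_pos hApos hBpos, mul_lt_mul_of_pos_left hab (mul_pos hApos hBpos)]
  · -- monotonicity consequence
    have hc : ε < ε - 1 / Real.log ε := by linarith
    have h := hanti (Set.mem_Ioi.mpr hz) (Set.mem_Ioi.mpr hc) hz'
    have hsub : ε - 1 / Real.log ε - ε = -1 / Real.log ε := by ring
    simp only [hsub] at h
    exact le_of_lt h
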